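/- Let D be an irreducible k×k Metzler matrix, c > 0, and ξ ∈ ℝ^k a positive right eigenvector of D with D ξ = 0 (critical case μ = 0). Let u : [0,∞) → ℝ^k be a nonnegative solution of the cumulant system with u_0 = λ, where λ ≥ 0 and λ ≠ 0, and let v : [0,∞) → ℝ^k be a differentiable solution of the linearized system dv_t/dt = D v_t − c · u_t ⊙ v_t with v_0 = ξ. Then v_t → 0 as t → ∞. -/

import Mathlib

open Filter Topology Set

/-- Maximum principle: if each `f i` starts below `g` and, whenever some maximal `f i`
touches `g`, its derivative is strictly smaller than `g`'s, then all `f i` stay below `g`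
on `[a,b]`. -/
lemma maxPrin {k : ℕ} (f f' : Fin k → ℝ → ℝ) (g g' : ℝ → ℝ) (a b : ℝ)
    (hf : ∀ i, ∀ t ∈ Icc a b, HasDerivAt (f i) (f' i t) t)
    (hg : ∀ t ∈ Icc a b, HasDerivAt g (g' t) t)
    (h0 : ∀ i, f i a ≤ g a)
    (key : ∀ t ∈ Icc a b, ∀ i, (∀ j, f j t ≤ f i t) → f i t = g t → f' i t < g' t) :
    ∀ t ∈ Icc a b, ∀ i, f i t ≤ g t := by
  by_contra hcon
  push_neg at hcon
  obtain ⟨t0, ht0, i0, hi0⟩ := hcon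
  set E : Set ℝ := {t | t ∈ Icc a b ∧ ∃ i, g t < f i t} with hE
  have hEne : E.Nonempty := ⟨t0, ht0, i0, hi0⟩
  have hEbdd : BddBelow E := ⟨a, fun t ht => ht.1.1⟩
  set c := sInf E with hc
  have hca : a ≤ c := le_csInf hEne fun t ht => ht.1.1
  have hcb : c ≤ b := le_trans (csInf_le hEbdd ⟨ht0, i0, hi0⟩) ht0.2
  have hcIcc : c ∈ Icc a b := ⟨hca, hcb⟩
  have hlt : ∀ s, a ≤ s → s < c → ∀ i, f i s ≤ g s := by
    intro s has hsc i
    by_contra h'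
    push_neg at h'
    exact absurd (csInf_le hEbdd ⟨⟨has, le_trans hsc.le hcb⟩, i, h'⟩) (not_le.mpr hsc)
  -- f i c ≤ g c
  have hfc : ∀ i, f i c ≤ g c := by
    intro i
    rcases eq_or_lt_of_le hca with h | h
    · rw [← h]; exact h0 i
    · have hcont : Tendsto (fun s => f i s - g s) (𝓝[<] c) (𝓝 (f i c - g c)) :=
        (((hf i c hcIcc).continuousAt.sub (hg c hcIcc).continuousAt)).continuousWithinAt
      have hev : ∀ᶠ s in 𝓝[<] c, f i s - g s ≤ 0 := by
        filter_upwards [Ioo_mem_nhdsLT_of_mem (show c ∈ Ioc a c from ⟨h, le_refl c⟩)] with s hs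
        exact sub_nonpos.mpr (hlt s hs.1.le hs.2 i)
      have := le_of_tendsto hcont hev
      linarith
  have hcE : c ∉ E := fun h => absurd (h.2.choose_spec) (not_lt.mpr (hfc _))
  -- eventually to the right, all f i < g
  have hev : ∀ i, ∀ᶠ s in 𝓝[>] c, f i s < g s := by
    intro i
    rcases lt_or_eq_of_le (hfc i) with h | h
    · have hcont : ContinuousAt (fun s => f i s - g s) c :=
        (hf i c hcIcc).continuousAt.sub (hg c hcIcc).continuousAt
      have : ∀ᶠ s in 𝓝 c, f i s - g s < 0 :=
        hcont.eventually_lt_const (show (fun s => f i s - g s) c < 0 by simp; linarith)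
      exact (this.filter_mono nhdsWithin_le_nhds).mono fun s hs => by linarith
    · have hmax : ∀ j, f j c ≤ f i c := fun j => h ▸ hfc j
      have hder : f' i c < g' c := key c hcIcc i hmax h
      have hd : HasDerivAt (fun s => f i s - g s) (f' i c - g' c) c :=
        (hf i c hcIcc).sub (hg c hcIcc)
      have hslope := hasDerivAt_iff_tendsto_slope.mp hd
      have hneg : ∀ᶠ s in 𝓝[≠] c, slope (fun s => f i s - g s) c s < 0 :=
        hslope.eventually_lt_const (by linarith)
      have hsub : 𝓝[>] c ≤ 𝓝[≠] c :=
        nhdsWithin_mono c (fun x hx => ne_of_gt hx)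
      filter_upwards [hneg.filter_mono hsub, self_mem_nhdsWithin] with s hs hs'
      have hsc : (0:ℝ) < s - c := sub_pos.mpr hs'
      rw [slope_def_field] at hs
      have : (f i s - g s - (f i c - g c)) / (s - c) < 0 := by
        simpa [div_eq_inv_mul] using hs
      rw [div_neg_iff] at this
      rcases this with ⟨h1, h2⟩ | ⟨h1, h2⟩
      · linarith
      · linarith
  have hall : ∀ᶠ s in 𝓝[>] c, ∀ i, f i s < g s := eventually_all.mpr hev
  obtain ⟨d, hd, hsub⟩ := mem_nhdsGT_iff_exists_Ioo_subset.mp hall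
  have hdc : ∀ e ∈ E, d ≤ e := by
    intro e he
    by_contra h'
    push_neg at h'
    have hce : c ≤ e := csInf_le hEbdd he
    have hne : c ≠ e := fun h => hcE (h ▸ he)
    have : e ∈ Ioo c d := ⟨lt_of_le_of_ne hce hne, h'⟩
    obtain ⟨i, hi⟩ := he.2
    exact absurd (hsub this i) (not_lt.mpr hi.le)
  exact absurd (le_csInf hEne hdc) (not_le.mpr hd)

lemma maxPrinLim {k : ℕ} (f f' : Fin k → ℝ → ℝ) (g g' : ℝ → ℝ) (a b : ℝ) (hab : a ≤ b)
    (hf : ∀ i, ∀ t ∈ Icc a b, HasDerivAt (f i) (f' i t) t)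
    (hg : ∀ t ∈ Icc a b, HasDerivAt g (g' t) t)
    (h0 : ∀ i, f i a ≤ g a)
    (key : ∀ t ∈ Icc a b, ∀ i, (∀ j, f j t ≤ f i t) → g t ≤ f i t → f' i t ≤ g' t) :
    ∀ t ∈ Icc a b, ∀ i, f i t ≤ g t := by
  intro t ht i
  apply le_of_forall_pos_le_add
  intro ε hε
  have hC : (0:ℝ) < 1 + (b - a) := by linarith
  set η := ε / (1 + (b - a)) with hη
  have hη0 : 0 < η := div_pos hε hC
  have happ := maxPrin f f' (fun s => g s + η * (1 + (s - a))) (fun s => g' s + η) a b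
    hf
    (fun s hs => by
      have h1 : HasDerivAt (fun s : ℝ => g s + η * (1 + (s - a))) (g' s + η * 1) s := by
        exact (hg s hs).add ((((hasDerivAt_id s).sub_const a).const_add 1).const_mul η)
      simpa using h1)
    (fun j => by
      have := h0 j
      have : f j a ≤ g a + η * (1 + (a - a)) := by simp; linarith
      exact this)
    (fun s hs j hmax heq => by
      have hpos : 0 < η * (1 + (s - a)) := by
        have : (0:ℝ) < 1 + (s - a) := by have := hs.1; linarith
        positivity
      have hge : g s ≤ f j s := by rw [heq]; linarith
      have := key s hs j hmax hge
      linarith)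
  have := happ t ht i
  have hmono : η * (1 + (t - a)) ≤ ε := by
    rw [hη]
    rw [div_mul_eq_mul_div, div_le_iff₀ hC]
    have h1 : 1 + (t - a) ≤ 1 + (b - a) := by have := ht.2; linarith
    have : ε * (1 + (t - a)) ≤ ε * (1 + (b - a)) := by
      exact mul_le_mul_of_nonneg_left h1 hε.le
    linarith [this]
  linarith

lemma mulVec_nonpos_at_max {k : ℕ} (D : Matrix (Fin k) (Fin k) ℝ)
    (hMetzler : ∀ i j : Fin k, i ≠ j → 0 ≤ D i j)
    (ξ : Fin k → ℝ) (hξpos : ∀ i, 0 < ξ i) (heig : D.mulVec ξ = 0)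
    (w : Fin k → ℝ) (i : Fin k) (hq : ∀ j, w j / ξ j ≤ w i / ξ i) :
    D.mulVec w i ≤ 0 := by
  have hterm : ∀ j, D i j * w j ≤ D i j * ξ j * (w i / ξ i) := by
    intro j
    rcases eq_or_ne j i with rfl | hne
    · rw [mul_assoc, mul_div_cancel₀ _ (ne_of_gt (hξpos j))]
    · have h1 : w j ≤ ξ j * (w i / ξ i) := by
        have := hq j
        rw [div_le_div_iff₀ (hξpos j) (hξpos i)] at this
        rw [mul_div_assoc']
        rw [le_div_iff₀ (hξpos i)]
        linarith [this]
      have h2 : 0 ≤ D i j := hMetzler i j (Ne.symm hne)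
      calc D i j * w j ≤ D i j * (ξ j * (w i / ξ i)) := mul_le_mul_of_nonneg_left h1 h2
        _ = D i j * ξ j * (w i / ξ i) := by ring
  have hsum : D.mulVec w i ≤ (Finset.univ.sum fun j => D i j * ξ j * (w i / ξ i)) := by
    rw [Matrix.mulVec, dotProduct]
    exact Finset.sum_le_sum fun j _ => hterm j
  have : (Finset.univ.sum fun j => D i j * ξ j * (w i / ξ i))
      = (D.mulVec ξ i) * (w i / ξ i) := by
    rw [Matrix.mulVec, dotProduct, Finset.sum_mul]
  rw [this, heig] at hsum
  simpa using hsum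

lemma mulVec_nonneg_at_min {k : ℕ} (D : Matrix (Fin k) (Fin k) ℝ)
    (hMetzler : ∀ i j : Fin k, i ≠ j → 0 ≤ D i j)
    (ξ : Fin k → ℝ) (hξpos : ∀ i, 0 < ξ i) (heig : D.mulVec ξ = 0)
    (w : Fin k → ℝ) (i : Fin k) (hq : ∀ j, w i / ξ i ≤ w j / ξ j) :
    0 ≤ D.mulVec w i := by
  have := mulVec_nonpos_at_max D hMetzler ξ hξpos heig (-w) i (fun j => by
    have := hq j
    simp only [Pi.neg_apply, neg_div]
    linarith)
  rw [Matrix.mulVec_neg] at this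
  simpa using this


set_option maxHeartbeats 2000000 in
/-- (From the proof of Theorem 3.4 (a) of the paper.) In the critical
irreducible case (`D ξ = 0`, `ξ > 0`), if `u` is a nonnegative solution of the
cumulant system with `u_0 = λ ≥ 0`, `λ ≠ 0`, and `v` solves the linearized system
`dv_t/dt = D v_t − c u_t ⊙ v_t` with `v_0 = ξ`, then `v_t → 0` as `t → ∞`. -/
theorem stmt9 (k : ℕ) (hk : 1 ≤ k) (c : ℝ) (hc : 0 < c)
    (D : Matrix (Fin k) (Fin k) ℝ)
    (hMetzler : ∀ i j : Fin k, i ≠ j → 0 ≤ D i j)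
    (hirr : ∀ J : Finset (Fin k), J.Nonempty → J ≠ Finset.univ →
      ∃ j ∈ J, ∃ i ∉ J, 0 < D j i)
    (ξ : Fin k → ℝ) (hξpos : ∀ i, 0 < ξ i)
    (heig : D.mulVec ξ = 0)
    (lam : Fin k → ℝ) (hlam : ∀ i, 0 ≤ lam i) (hlam0 : lam ≠ 0)
    (u : ℝ → Fin k → ℝ)
    (husol : ∀ t ∈ Set.Ici (0 : ℝ),
      HasDerivAt u (D.mulVec (u t) - (c / 2) • (u t * u t)) t)
    (hunonneg : ∀ t ∈ Set.Ici (0 : ℝ), ∀ i : Fin k, 0 ≤ u t i)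
    (huinit : u 0 = lam)
    (v : ℝ → Fin k → ℝ)
    (hvsol : ∀ t ∈ Set.Ici (0 : ℝ),
      HasDerivAt v (D.mulVec (v t) - c • (u t * v t)) t)
    (hvinit : v 0 = ξ) :
    Tendsto v atTop (𝓝 0) := by
  classical
  have hkne : Nonempty (Fin k) := Fin.pos_iff_nonempty.mp hk
  have hne : (Finset.univ : Finset (Fin k)).Nonempty := Finset.univ_nonempty
  -- constants
  set Ξ : ℝ := Finset.univ.sup' hne ξ with hΞdef
  set ζ : ℝ := Finset.univ.inf' hne ξ with hζdef
  have hξΞ : ∀ i, ξ i ≤ Ξ := fun i => Finset.le_sup' ξ (Finset.mem_univ i)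
  have hζξ : ∀ i, ζ ≤ ξ i := fun i => Finset.inf'_le ξ (Finset.mem_univ i)
  have hΞpos : 0 < Ξ := lt_of_lt_of_le (hξpos (Classical.arbitrary _)) (hξΞ _)
  have hζpos : 0 < ζ := by
    obtain ⟨i, -, hi⟩ := Finset.exists_mem_eq_inf' hne ξ
    rw [hζdef, hi]; exact hξpos i
  set P : ℝ := Finset.univ.sup' hne (fun i => lam i / ξ i) with hPdef
  have hP0 : 0 ≤ P := by
    have i := Classical.arbitrary (Fin k)
    exact le_trans (div_nonneg (hlam i) (hξpos i).le)
      (Finset.le_sup' (fun i => lam i / ξ i) (Finset.mem_univ i))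
  -- componentwise derivatives
  have hu' : ∀ t ∈ Ici (0:ℝ), ∀ i, HasDerivAt (fun s => u s i)
      (D.mulVec (u t) i - c / 2 * (u t i * u t i)) t := by
    intro t ht i
    have := (hasDerivAt_pi.mp (husol t ht)) i
    simpa [Pi.sub_apply, Pi.smul_apply, Pi.mul_apply, smul_eq_mul] using this
  have hv' : ∀ t ∈ Ici (0:ℝ), ∀ i, HasDerivAt (fun s => v s i)
      (D.mulVec (v t) i - c * (u t i * v t i)) t := by
    intro t ht i
    have := (hasDerivAt_pi.mp (hvsol t ht)) i
    simpa [Pi.sub_apply, Pi.smul_apply, Pi.mul_apply, smul_eq_mul] using this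
  -- Step A : upper bound
  have stepA : ∀ t ∈ Ici (0:ℝ), ∀ i, u t i / ξ i ≤ P := by
    intro t ht i
    have ht' : (0:ℝ) ≤ t := ht
    refine maxPrinLim (fun i s => u s i / ξ i)
      (fun i s => (D.mulVec (u s) i - c / 2 * (u s i * u s i)) / ξ i)
      (fun _ => P) (fun _ => 0) 0 t ht'
      (fun i s hs => (hu' s hs.1 i).div_const (ξ i))
      (fun s _ => hasDerivAt_const s P)
      (fun i => by
        show u 0 i / ξ i ≤ P
        rw [huinit]
        exact Finset.le_sup' (fun i => lam i / ξ i) (Finset.mem_univ i))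
      ?_ t ⟨ht', le_refl t⟩ i
    intro s hs i hmax _
    have hmv : D.mulVec (u s) i ≤ 0 :=
      mulVec_nonpos_at_max D hMetzler ξ hξpos heig (u s) i hmax
    have hsq : 0 ≤ c / 2 * (u s i * u s i) := by
      have := hunonneg s hs.1 i
      positivity
    exact div_nonpos_of_nonpos_of_nonneg (by linarith) (hξpos i).le
  have stepA' : ∀ t ∈ Ici (0:ℝ), ∀ i, u t i ≤ P * ξ i := by
    intro t ht i
    have := stepA t ht i
    rw [div_le_iff₀ (hξpos i)] at this
    linarith
  -- Step B : positivity persists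
  have stepB : ∀ i, ∀ s t : ℝ, 0 ≤ s → s ≤ t → 0 < u s i → 0 < u t i := by
    set K : ℝ := Finset.univ.sup' hne (fun i => |D i i|) + c / 2 * (P * Ξ) with hKdef
    have hKD : ∀ i, |D i i| ≤ Finset.univ.sup' hne (fun i => |D i i|) :=
      fun i => Finset.le_sup' (fun i => |D i i|) (Finset.mem_univ i)
    have hlow : ∀ ρ ∈ Ici (0:ℝ), ∀ i,
        -(K * u ρ i) ≤ D.mulVec (u ρ) i - c / 2 * (u ρ i * u ρ i) := by
      intro ρ hρ i
      have hui : 0 ≤ u ρ i := hunonneg ρ hρ i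
      have huiPΞ : u ρ i ≤ P * Ξ := by
        have h1 := stepA' ρ hρ i
        have h2 : P * ξ i ≤ P * Ξ := mul_le_mul_of_nonneg_left (hξΞ i) hP0
        linarith
      have hmv : D i i * u ρ i ≤ D.mulVec (u ρ) i := by
        rw [Matrix.mulVec, dotProduct]
        rw [← Finset.add_sum_erase _ _ (Finset.mem_univ i)]
        have : 0 ≤ ∑ j ∈ Finset.univ.erase i, D i j * u ρ j := by
          apply Finset.sum_nonneg
          intro j hj
          exact mul_nonneg (hMetzler i j (Finset.ne_of_mem_erase hj).symm) (hunonneg ρ hρ j)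
        linarith
      have h3 : -(|D i i| * u ρ i) ≤ D i i * u ρ i := by
        have := neg_abs_le (D i i)
        nlinarith
      have h4 : c / 2 * (u ρ i * u ρ i) ≤ c / 2 * (P * Ξ) * u ρ i := by
        nlinarith [mul_nonneg hui (sub_nonneg.mpr huiPΞ)]
      have h5 := hKD i
      simp only [hKdef]
      nlinarith
    intro i s t hs hst hpos
    rcases eq_or_lt_of_le hst with rfl | hst'
    · exact hpos
    have hmono : MonotoneOn (fun ρ => Real.exp (K * ρ) * u ρ i) (Icc s t) := by
      have hder : ∀ ρ ∈ Icc s t, HasDerivAt (fun ρ => Real.exp (K * ρ) * u ρ i)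
          (Real.exp (K * ρ) * K * u ρ i +
            Real.exp (K * ρ) * (D.mulVec (u ρ) i - c / 2 * (u ρ i * u ρ i))) ρ := by
        intro ρ hρ
        have hρ0 : ρ ∈ Ici (0:ℝ) := le_trans hs hρ.1
        have h1 : HasDerivAt (fun ρ : ℝ => Real.exp (K * ρ)) (Real.exp (K * ρ) * K) ρ := by
          have := ((hasDerivAt_id ρ).const_mul K).exp
          simpa using this
        exact (h1.mul (hu' ρ hρ0 i)).congr_deriv (by ring)
      apply monotoneOn_of_deriv_nonneg (convex_Icc s t)
      · exact fun ρ hρ => (hder ρ hρ).continuousAt.continuousWithinAt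
      · intro ρ hρ
        rw [interior_Icc] at hρ
        exact (hder ρ (Ioo_subset_Icc_self hρ)).differentiableAt.differentiableWithinAt
      · intro ρ hρ
        rw [interior_Icc] at hρ
        rw [(hder ρ (Ioo_subset_Icc_self hρ)).deriv]
        have hρ0 : ρ ∈ Ici (0:ℝ) := le_trans hs (Ioo_subset_Icc_self hρ).1
        have hl := hlow ρ hρ0 i
        have he : 0 < Real.exp (K * ρ) := Real.exp_pos _
        nlinarith
    have h6 := hmono (left_mem_Icc.mpr hst) (right_mem_Icc.mpr hst) hst
    dsimp only at h6
    have he1 : 0 < Real.exp (K * s) * u s i := mul_pos (Real.exp_pos _) hpos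
    have he2 : 0 < Real.exp (K * t) := Real.exp_pos _
    by_contra h'
    push_neg at h'
    have : Real.exp (K * t) * u t i ≤ 0 := mul_nonpos_of_nonneg_of_nonpos he2.le h'
    linarith
  -- Step C : positivity spreads
  have stepC : ∃ T : ℝ, 0 ≤ T ∧ ∀ i, 0 < u T i := by
    set S : Finset (Fin k) := Finset.univ.filter (fun i => ∃ t, 0 ≤ t ∧ 0 < u t i) with hSdef
    have hSmem : ∀ i, i ∈ S ↔ ∃ t, 0 ≤ t ∧ 0 < u t i := by
      intro i; simp [hSdef]
    have hSne : S.Nonempty := by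
      have : ∃ i, 0 < lam i := by
        by_contra h'
        push_neg at h'
        apply hlam0
        funext i
        exact le_antisymm (h' i) (hlam i)
      obtain ⟨i, hi⟩ := this
      exact ⟨i, (hSmem i).mpr ⟨0, le_refl 0, by rw [huinit]; exact hi⟩⟩
    have hSuniv : S = Finset.univ := by
      by_contra hneq
      obtain ⟨j, hjS, i, hiS, hDji⟩ := hirr Sᶜ
        (Finset.nonempty_iff_ne_empty.mpr
          (fun h0 => hneq ((Finset.compl_eq_empty_iff S).mp h0)))
        (by
          intro h
          rw [Finset.compl_eq_univ_iff] at h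
          exact Finset.not_nonempty_empty (h ▸ hSne))
      rw [Finset.mem_compl] at hjS
      rw [Finset.notMem_compl] at hiS
      -- j never positive, i eventually positive
      have hj0 : ∀ t, 0 ≤ t → u t j = 0 := by
        intro t ht
        refine le_antisymm ?_ (hunonneg t ht j)
        by_contra h'
        push_neg at h'
        exact hjS ((hSmem j).mpr ⟨t, ht, h'⟩)
      obtain ⟨ti, hti0, htipos⟩ := (hSmem i).mp hiS
      set t := ti + 1 with htdef
      have ht0 : (0:ℝ) < t := by linarith
      have hut : 0 < u t i := stepB i ti t hti0 (by linarith) htipos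
      -- derivative of component j at t is 0 since u · j vanishes on a neighborhood
      have hev : (fun s => u s j) =ᶠ[𝓝 t] (fun _ => (0:ℝ)) := by
        have hIoi : Ioi (0:ℝ) ∈ 𝓝 t := Ioi_mem_nhds ht0
        filter_upwards [hIoi] with s hs
        exact hj0 s (le_of_lt hs)
      have hd1 : HasDerivAt (fun s => u s j)
          (D.mulVec (u t) j - c / 2 * (u t j * u t j)) t := hu' t ht0.le j
      have hd2 : HasDerivAt (fun s => u s j) 0 t :=
        (hasDerivAt_const t (0:ℝ)).congr_of_eventuallyEq hev
      have huniq : D.mulVec (u t) j - c / 2 * (u t j * u t j) = 0 := hd1.unique hd2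
      have hjt : u t j = 0 := hj0 t ht0.le
      have hsum : D j i * u t i ≤ D.mulVec (u t) j := by
        rw [Matrix.mulVec, dotProduct]
        apply Finset.single_le_sum (f := fun m => D j m * u t m) ?_ (Finset.mem_univ i)
        intro m _
        rcases eq_or_ne m j with rfl | hmj
        · simp [hjt]
        · exact mul_nonneg (hMetzler j m (Ne.symm hmj)) (hunonneg t ht0.le m)
      have hpos : 0 < D j i * u t i := mul_pos hDji hut
      rw [hjt] at huniq
      simp at huniq
      linarith
    -- choose per-index positivity times, take max
    have hex : ∀ i : Fin k, ∃ t, 0 ≤ t ∧ 0 < u t i := by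
      intro i
      exact (hSmem i).mp (hSuniv ▸ Finset.mem_univ i)
    choose tt htt0 httpos using hex
    refine ⟨Finset.univ.sup' hne tt, ?_, ?_⟩
    · exact le_trans (htt0 (Classical.arbitrary _)) (Finset.le_sup' tt (Finset.mem_univ _))
    · intro i
      exact stepB i (tt i) _ (htt0 i) (Finset.le_sup' tt (Finset.mem_univ i)) (httpos i)
  obtain ⟨T, hT0, hTpos⟩ := stepC
  set δ : ℝ := Finset.univ.inf' hne (fun i => u T i / ξ i) with hδdef
  have hδpos : 0 < δ := by
    rw [hδdef, Finset.lt_inf'_iff]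
    exact fun i _ => div_pos (hTpos i) (hξpos i)
  set r : ℝ → ℝ := fun t => δ⁻¹ + c / 2 * Ξ * (t - T) with hrdef
  have hrT : r T = δ⁻¹ := by simp [hrdef]
  have hrpos : ∀ t, T ≤ t → 0 < r t := by
    intro t ht
    have h1 : 0 < δ⁻¹ := inv_pos.mpr hδpos
    have h2 : 0 ≤ c / 2 * Ξ * (t - T) := by
      have : (0:ℝ) ≤ t - T := by linarith
      positivity
    simp only [hrdef]; linarith
  have hr' : ∀ t : ℝ, HasDerivAt r (c / 2 * Ξ) t := by
    intro t
    have : HasDerivAt (fun s : ℝ => δ⁻¹ + c / 2 * Ξ * (s - T)) (c / 2 * Ξ * 1) t :=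
      (((hasDerivAt_id t).sub_const T).const_mul (c / 2 * Ξ)).const_add δ⁻¹
    simp only [mul_one] at this
    exact this
  -- Step D : lower bound u t i ≥ (r t)⁻¹ ξ i for t ≥ T
  have stepD : ∀ t, T ≤ t → ∀ i, (r t)⁻¹ * ξ i ≤ u t i := by
    intro t htT i
    have hres : -(u t i / ξ i) ≤ -(r t)⁻¹ := by
      refine maxPrinLim (fun i s => -(u s i / ξ i))
        (fun i s => -((D.mulVec (u s) i - c / 2 * (u s i * u s i)) / ξ i))
        (fun s => -(r s)⁻¹) (fun s => (c / 2 * Ξ) / (r s) ^ 2) T t htT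
        (fun i s hs => (((hu' s (le_trans hT0 hs.1) i).div_const (ξ i)).neg))
        (fun s hs => by
          have h := ((hr' s).inv (ne_of_gt (hrpos s hs.1))).neg
          have heq : -(-(c / 2 * Ξ) / r s ^ 2) = (c / 2 * Ξ) / (r s) ^ 2 := by ring
          rw [heq] at h
          exact h)
        (fun i => by
          show -(u T i / ξ i) ≤ -(r T)⁻¹
          rw [hrT, inv_inv]
          have : δ ≤ u T i / ξ i := Finset.inf'_le (fun i => u T i / ξ i) (Finset.mem_univ i)
          linarith)
        ?_ t ⟨htT, le_refl t⟩ i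
      intro s hs i hmax hge
      have hs0 : s ∈ Ici (0:ℝ) := le_trans hT0 hs.1
      have hrs : 0 < r s := hrpos s hs.1
      have hmv : 0 ≤ D.mulVec (u s) i := by
        apply mulVec_nonneg_at_min D hMetzler ξ hξpos heig (u s) i
        intro j
        have := hmax j
        linarith
      have hratio : u s i / ξ i ≤ (r s)⁻¹ := by
        linarith
      have hur : u s i * r s ≤ ξ i := by
        rw [div_le_iff₀ (hξpos i)] at hratio
        calc u s i * r s ≤ (r s)⁻¹ * ξ i * r s :=
              mul_le_mul_of_nonneg_right hratio hrs.le
          _ = ξ i := by field_simp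
      have hu0 : 0 ≤ u s i := hunonneg s hs0 i
      have h2 : (u s i * r s) * (u s i * r s) ≤ ξ i * ξ i :=
        mul_le_mul hur hur (by positivity) (hξpos i).le
      have h3 : ξ i * ξ i ≤ Ξ * ξ i :=
        mul_le_mul_of_nonneg_right (hξΞ i) (hξpos i).le
      show -((D.mulVec (u s) i - c / 2 * (u s i * u s i)) / ξ i) ≤ c / 2 * Ξ / r s ^ 2
      have hstep1 : -((D.mulVec (u s) i - c / 2 * (u s i * u s i)) / ξ i)
          ≤ c / 2 * (u s i * u s i) / ξ i := by
        rw [neg_div' , div_le_div_iff₀ (hξpos i) (hξpos i)]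
        nlinarith [hmv, hξpos i]
      have hstep2 : c / 2 * (u s i * u s i) / ξ i ≤ c / 2 * Ξ / r s ^ 2 := by
        rw [div_le_div_iff₀ (hξpos i) (pow_pos hrs 2)]
        have h4 : c / 2 * (u s i * r s * (u s i * r s)) ≤ c / 2 * (Ξ * ξ i) :=
          mul_le_mul_of_nonneg_left (h2.trans h3) (by positivity)
        calc c / 2 * (u s i * u s i) * r s ^ 2
            = c / 2 * (u s i * r s * (u s i * r s)) := by ring
          _ ≤ c / 2 * (Ξ * ξ i) := h4
          _ = c / 2 * Ξ * ξ i := by ring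
      linarith
    have hres2 : (r t)⁻¹ ≤ u t i / ξ i := by linarith
    exact (le_div_iff₀ (hξpos i)).mp hres2
  -- Step E1 : |v| ≤ ξ
  have stepE1 : ∀ t ∈ Ici (0:ℝ), ∀ i, |v t i| ≤ ξ i := by
    intro t ht i
    have ht' : (0:ℝ) ≤ t := ht
    have hup : v t i / ξ i ≤ 1 := by
      refine maxPrinLim (fun i s => v s i / ξ i)
        (fun i s => (D.mulVec (v s) i - c * (u s i * v s i)) / ξ i)
        (fun _ => 1) (fun _ => 0) 0 t ht'
        (fun i s hs => (hv' s hs.1 i).div_const (ξ i))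
        (fun s _ => hasDerivAt_const s 1)
        (fun i => by
          show v 0 i / ξ i ≤ 1
          rw [hvinit, div_self (ne_of_gt (hξpos i))])
        ?_ t ⟨ht', le_refl t⟩ i
      intro s hs i hmax hge
      have hmv : D.mulVec (v s) i ≤ 0 :=
        mulVec_nonpos_at_max D hMetzler ξ hξpos heig (v s) i hmax
      have hvpos : 0 < v s i := by
        have h1 : (1:ℝ) ≤ v s i / ξ i := hge
        have := (le_div_iff₀ (hξpos i)).mp h1
        nlinarith [hξpos i]
      have huv : 0 ≤ c * (u s i * v s i) :=
        mul_nonneg hc.le (mul_nonneg (hunonneg s hs.1 i) hvpos.le)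
      exact div_nonpos_of_nonpos_of_nonneg (by linarith) (hξpos i).le
    have hdown : -(v t i / ξ i) ≤ 1 := by
      refine maxPrinLim (fun i s => -(v s i / ξ i))
        (fun i s => -((D.mulVec (v s) i - c * (u s i * v s i)) / ξ i))
        (fun _ => 1) (fun _ => 0) 0 t ht'
        (fun i s hs => ((hv' s hs.1 i).div_const (ξ i)).neg)
        (fun s _ => hasDerivAt_const s 1)
        (fun i => by
          show -(v 0 i / ξ i) ≤ 1
          rw [hvinit, div_self (ne_of_gt (hξpos i))]
          linarith)
        ?_ t ⟨ht', le_refl t⟩ i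
      intro s hs i hmax hge
      have hmv : 0 ≤ D.mulVec (v s) i := by
        apply mulVec_nonneg_at_min D hMetzler ξ hξpos heig (v s) i
        intro j
        have := hmax j
        linarith
      have hvneg : v s i < 0 := by
        have h1 : v s i / ξ i ≤ -1 := by linarith
        have := (div_le_iff₀ (hξpos i)).mp h1
        nlinarith [hξpos i]
      have huv : c * (u s i * v s i) ≤ 0 :=
        mul_nonpos_of_nonneg_of_nonpos hc.le
          (mul_nonpos_of_nonneg_of_nonpos (hunonneg s hs.1 i) hvneg.le)
      have : -((D.mulVec (v s) i - c * (u s i * v s i)) / ξ i)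
          = (c * (u s i * v s i) - D.mulVec (v s) i) / ξ i := by ring
      rw [this]
      exact div_nonpos_of_nonpos_of_nonneg (by linarith) (hξpos i).le
    have h1 : v t i ≤ ξ i := by
      rw [div_le_one (hξpos i)] at hup
      exact hup
    have h2 : -(ξ i) ≤ v t i := by
      have h3 : (-1:ℝ) ≤ v t i / ξ i := by linarith
      have := (le_div_iff₀ (hξpos i)).mp h3
      linarith
    exact abs_le.mpr ⟨h2, h1⟩
  -- Step E2 : decay
  set β : ℝ := 2 * ζ / Ξ with hβdef
  have hβpos : 0 < β := by positivity
  set ψ : ℝ → ℝ := fun t => Real.exp (-β * Real.log (δ * r t)) with hψdef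
  have hψT : ψ T = 1 := by
    simp [hψdef, hrT, mul_inv_cancel₀ (ne_of_gt hδpos)]
  have hψpos : ∀ t, 0 < ψ t := fun t => Real.exp_pos _
  have hψ' : ∀ s, T ≤ s → HasDerivAt ψ (ψ s * (-β * (δ * (c / 2 * Ξ) / (δ * r s)))) s := by
    intro s hs
    have hrs : 0 < r s := hrpos s hs
    have hδr : δ * r s ≠ 0 := ne_of_gt (mul_pos hδpos hrs)
    have hinner : HasDerivAt (fun s => δ * r s) (δ * (c / 2 * Ξ)) s := (hr' s).const_mul δ
    have hlog : HasDerivAt (fun s => Real.log (δ * r s)) (δ * (c / 2 * Ξ) / (δ * r s)) s :=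
      hinner.log hδr
    have hmul : HasDerivAt (fun s => -β * Real.log (δ * r s))
        (-β * (δ * (c / 2 * Ξ) / (δ * r s))) s := hlog.const_mul (-β)
    exact hmul.exp
  have hΨeq : ∀ s, T ≤ s →
      ψ s * (-β * (δ * (c / 2 * Ξ) / (δ * r s))) = -(c * ζ) * (r s)⁻¹ * ψ s := by
    intro s hs
    have hrs : 0 < r s := hrpos s hs
    have hβ : β = 2 * ζ / Ξ := hβdef
    rw [hβ]
    field_simp
  have stepE2 : ∀ t, T ≤ t → ∀ i, |v t i| ≤ ξ i * ψ t := by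
    intro t htT i
    have hup : v t i / ξ i ≤ ψ t := by
      refine maxPrinLim (fun i s => v s i / ξ i)
        (fun i s => (D.mulVec (v s) i - c * (u s i * v s i)) / ξ i)
        ψ (fun s => ψ s * (-β * (δ * (c / 2 * Ξ) / (δ * r s)))) T t htT
        (fun i s hs => (hv' s (le_trans hT0 hs.1) i).div_const (ξ i))
        (fun s hs => hψ' s hs.1)
        (fun i => by
          show v T i / ξ i ≤ ψ T
          rw [hψT, div_le_one (hξpos i)]
          exact le_trans (le_abs_self _) (stepE1 T hT0 i))
        ?_ t ⟨htT, le_refl t⟩ i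
      intro s hs i hmax hge
      have hs0 : s ∈ Ici (0:ℝ) := le_trans hT0 hs.1
      have hrs : 0 < r s := hrpos s hs.1
      have hri : 0 ≤ (r s)⁻¹ := (inv_pos.mpr hrs).le
      have hψs : 0 < ψ s := hψpos s
      have hmv : D.mulVec (v s) i ≤ 0 :=
        mulVec_nonpos_at_max D hMetzler ξ hξpos heig (v s) i hmax
      have hqpos : 0 < v s i / ξ i := lt_of_lt_of_le hψs hge
      rw [hΨeq s hs.1]
      have e1 : c * ((r s)⁻¹ * ξ i) ≤ c * u s i :=
        mul_le_mul_of_nonneg_left (stepD s hs.1 i) hc.le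
      have e2 : c * ((r s)⁻¹ * ξ i) * (v s i / ξ i) ≤ c * u s i * (v s i / ξ i) :=
        mul_le_mul_of_nonneg_right e1 hqpos.le
      have e3 : 0 ≤ c * ((r s)⁻¹ * ξ i) :=
        mul_nonneg hc.le (mul_nonneg hri (hξpos i).le)
      have e4 : c * ((r s)⁻¹ * ξ i) * ψ s ≤ c * ((r s)⁻¹ * ξ i) * (v s i / ξ i) :=
        mul_le_mul_of_nonneg_left hge e3
      have e5 : c * ζ * ((r s)⁻¹ * ψ s) ≤ c * ξ i * ((r s)⁻¹ * ψ s) :=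
        mul_le_mul_of_nonneg_right (mul_le_mul_of_nonneg_left (hζξ i) hc.le)
          (mul_nonneg hri hψs.le)
      have e6 : (D.mulVec (v s) i - c * (u s i * v s i)) / ξ i
          ≤ (0 - c * (u s i * v s i)) / ξ i :=
        (div_le_div_iff_of_pos_right (hξpos i)).mpr (by linarith)
      have e7 : (0 - c * (u s i * v s i)) / ξ i = -(c * u s i * (v s i / ξ i)) := by
        ring
      calc (D.mulVec (v s) i - c * (u s i * v s i)) / ξ i
          ≤ -(c * u s i * (v s i / ξ i)) := by rw [← e7]; exact e6
        _ ≤ -(c * ((r s)⁻¹ * ξ i) * (v s i / ξ i)) := by linarith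
        _ ≤ -(c * ((r s)⁻¹ * ξ i) * ψ s) := by linarith
        _ = -(c * ξ i * ((r s)⁻¹ * ψ s)) := by ring
        _ ≤ -(c * ζ * ((r s)⁻¹ * ψ s)) := by linarith
        _ = -(c * ζ) * (r s)⁻¹ * ψ s := by ring
    have hdown : -(v t i / ξ i) ≤ ψ t := by
      refine maxPrinLim (fun i s => -(v s i / ξ i))
        (fun i s => -((D.mulVec (v s) i - c * (u s i * v s i)) / ξ i))
        ψ (fun s => ψ s * (-β * (δ * (c / 2 * Ξ) / (δ * r s)))) T t htT
        (fun i s hs => ((hv' s (le_trans hT0 hs.1) i).div_const (ξ i)).neg)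
        (fun s hs => hψ' s hs.1)
        (fun i => by
          show -(v T i / ξ i) ≤ ψ T
          rw [hψT]
          have h1 : -(ξ i) ≤ v T i := (abs_le.mp (stepE1 T hT0 i)).1
          have h2 : (-1:ℝ) ≤ v T i / ξ i := by
            rw [le_div_iff₀ (hξpos i)]
            linarith
          linarith)
        ?_ t ⟨htT, le_refl t⟩ i
      intro s hs i hmax hge
      have hs0 : s ∈ Ici (0:ℝ) := le_trans hT0 hs.1
      have hrs : 0 < r s := hrpos s hs.1
      have hri : 0 ≤ (r s)⁻¹ := (inv_pos.mpr hrs).le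
      have hψs : 0 < ψ s := hψpos s
      have hmv : 0 ≤ D.mulVec (v s) i := by
        apply mulVec_nonneg_at_min D hMetzler ξ hξpos heig (v s) i
        intro j
        have := hmax j
        linarith
      have hqpos : 0 < -(v s i / ξ i) := lt_of_lt_of_le hψs hge
      rw [hΨeq s hs.1]
      have e1 : c * ((r s)⁻¹ * ξ i) ≤ c * u s i :=
        mul_le_mul_of_nonneg_left (stepD s hs.1 i) hc.le
      have e2 : c * ((r s)⁻¹ * ξ i) * (-(v s i / ξ i)) ≤ c * u s i * (-(v s i / ξ i)) :=
        mul_le_mul_of_nonneg_right e1 hqpos.le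
      have e3 : 0 ≤ c * ((r s)⁻¹ * ξ i) :=
        mul_nonneg hc.le (mul_nonneg hri (hξpos i).le)
      have e4 : c * ((r s)⁻¹ * ξ i) * ψ s ≤ c * ((r s)⁻¹ * ξ i) * (-(v s i / ξ i)) :=
        mul_le_mul_of_nonneg_left hge e3
      have e5 : c * ζ * ((r s)⁻¹ * ψ s) ≤ c * ξ i * ((r s)⁻¹ * ψ s) :=
        mul_le_mul_of_nonneg_right (mul_le_mul_of_nonneg_left (hζξ i) hc.le)
          (mul_nonneg hri hψs.le)
      have e6 : -((D.mulVec (v s) i - c * (u s i * v s i)) / ξ i)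
          ≤ -((0 - c * (u s i * v s i)) / ξ i) :=
        neg_le_neg ((div_le_div_iff_of_pos_right (hξpos i)).mpr (by linarith))
      have e7 : -((0 - c * (u s i * v s i)) / ξ i) = c * u s i * (v s i / ξ i) := by
        ring
      calc -((D.mulVec (v s) i - c * (u s i * v s i)) / ξ i)
          ≤ c * u s i * (v s i / ξ i) := by rw [← e7]; exact e6
        _ = -(c * u s i * (-(v s i / ξ i))) := by ring
        _ ≤ -(c * ((r s)⁻¹ * ξ i) * (-(v s i / ξ i))) := by linarith
        _ ≤ -(c * ((r s)⁻¹ * ξ i) * ψ s) := by linarith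
        _ = -(c * ξ i * ((r s)⁻¹ * ψ s)) := by ring
        _ ≤ -(c * ζ * ((r s)⁻¹ * ψ s)) := by linarith
        _ = -(c * ζ) * (r s)⁻¹ * ψ s := by ring
    have h1 : v t i ≤ ξ i * ψ t := by
      rw [div_le_iff₀ (hξpos i)] at hup
      linarith [hup]
    have h2 : -(ξ i * ψ t) ≤ v t i := by
      have h3 : v t i / ξ i ≥ -ψ t := by linarith
      have h4 : -ψ t ≤ v t i / ξ i := h3
      have := (le_div_iff₀ (hξpos i)).mp h4
      nlinarith [this]
    exact abs_le.mpr ⟨h2, h1⟩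
  -- conclusion
  have hψ0 : Tendsto ψ atTop (𝓝 0) := by
    have hA : Tendsto (fun t : ℝ => t - T) atTop atTop :=
      tendsto_atTop_add_const_right atTop (-T) tendsto_id
    have hB : Tendsto (fun t : ℝ => c / 2 * Ξ * (t - T)) atTop atTop :=
      hA.const_mul_atTop (by positivity)
    have h1 : Tendsto r atTop atTop := by
      rw [hrdef]
      exact tendsto_atTop_add_const_left atTop δ⁻¹ hB
    have h2 : Tendsto (fun t => δ * r t) atTop atTop := h1.const_mul_atTop hδpos
    have h3 : Tendsto (fun t => Real.log (δ * r t)) atTop atTop :=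
      Real.tendsto_log_atTop.comp h2
    have h4 : Tendsto (fun t => -β * Real.log (δ * r t)) atTop atBot :=
      h3.const_mul_atTop_of_neg (by linarith)
    exact Real.tendsto_exp_atBot.comp h4
  rw [tendsto_pi_nhds]
  intro i
  have : Tendsto (fun t => Ξ * ψ t) atTop (𝓝 0) := by
    have := hψ0.const_mul Ξ
    rw [mul_zero] at this
    exact this
  refine squeeze_zero_norm' ?_ this
  filter_upwards [eventually_ge_atTop T] with t ht
  have := stepE2 t ht i
  have h2 : ξ i * ψ t ≤ Ξ * ψ t := mul_le_mul_of_nonneg_right (hξΞ i) (hψpos t).le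
  simp only [Pi.zero_apply, Real.norm_eq_abs]
  linarith
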